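/- Let C be a good cell structure on an n-dimensional polytope U, let Ω ∈ C be an n-dimensional cell, and let W be the intersection of Ω with a hyperplane that meets the relative interior of Ω. Let C' be obtained from C by replacing each cell E ⊆ Ω for which E \ W is disconnected by the three cells E ∩ W and the closures E_1, E_2 of the two components of E \ W. Then C' is again a good cell structure on U. -/

import Mathlib

open Set

/-- A polytope in `ℝ^d` is a finite intersection of closed half-spaces. -/
def IsPolytope {d : ℕ} (P : Set (Fin d → ℝ)) : Prop :=
  ∃ (k : ℕ) (f : Fin k → ((Fin d → ℝ) →ₗ[ℝ] ℝ)) (c : Fin k → ℝ),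
    P = ⋂ i, {x | f i x ≤ c i}

/-- The dimension of a subset of `ℝ^d`: the dimension of its affine span. -/
noncomputable def pdim {d : ℕ} (P : Set (Fin d → ℝ)) : ℕ :=
  Module.finrank ℝ (affineSpan ℝ P).direction

/-- `F` is a face of `P`: the intersection of `P` with a hyperplane such that
`P` lies in one of the two closed half-spaces bounded by it. -/
def IsFaceOf {d : ℕ} (F P : Set (Fin d → ℝ)) : Prop :=
  ∃ (f : (Fin d → ℝ) →ₗ[ℝ] ℝ) (c : ℝ), f ≠ 0 ∧ (∀ x ∈ P, f x ≤ c) ∧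
    F = P ∩ {x | f x = c}

/-- A cell structure on a polytope `U ⊆ ℝ^d`: a finite collection of polytopal
cells covering `U`, with intersections of cells unions of cells, pairwise
disjoint relative interiors, and faces of cells unions of cells. -/
structure IsCellStructure {d : ℕ} (U : Set (Fin d → ℝ))
    (𝒞 : Set (Set (Fin d → ℝ))) : Prop where
  finite : 𝒞.Finite
  polytope : ∀ C ∈ 𝒞, IsPolytope C
  cover : ⋃₀ 𝒞 = U
  inter : ∀ C ∈ 𝒞, ∀ D ∈ 𝒞, ∃ 𝒮 ⊆ 𝒞, C ∩ D = ⋃₀ 𝒮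
  relint_disjoint : ∀ C ∈ 𝒞, ∀ D ∈ 𝒞, C ≠ D →
    intrinsicInterior ℝ C ∩ intrinsicInterior ℝ D = ∅
  faces : ∀ C ∈ 𝒞, ∀ F : Set (Fin d → ℝ), IsFaceOf F C → ∃ 𝒮 ⊆ 𝒞, F = ⋃₀ 𝒮

/-- A cell structure on an `n`-dimensional polytope is good if every cell of
dimension `i < n` is the intersection of the `i`-dimensional faces of the
cells of dimension `> i` that contain it. -/
def IsGoodCellStructure {d : ℕ} (n : ℕ) (U : Set (Fin d → ℝ))
    (𝒞 : Set (Set (Fin d → ℝ))) : Prop :=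
  IsCellStructure U 𝒞 ∧ pdim U = n ∧
    ∀ C ∈ 𝒞, pdim C < n →
      C = ⋂₀ {F | ∃ E ∈ 𝒞, pdim C < pdim E ∧ IsFaceOf F E ∧
        pdim F = pdim C ∧ C ⊆ F}

variable {d : ℕ}

lemma relint_iff {s : Set (Fin d → ℝ)} {x : Fin d → ℝ} :
    x ∈ intrinsicInterior ℝ s ↔ x ∈ s ∧ ∃ ε > 0, ∀ y ∈ (affineSpan ℝ s : Set (Fin d → ℝ)),
      dist y x < ε → y ∈ s := by
  constructor
  · rintro ⟨y, hy, rfl⟩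
    refine ⟨interior_subset (s := ((↑) ⁻¹' s : Set <| affineSpan ℝ s)) hy, ?_⟩
    rw [mem_interior_iff_mem_nhds, Metric.mem_nhds_iff] at hy
    obtain ⟨ε, hε, hb⟩ := hy
    refine ⟨ε, hε, fun z hz hdz => ?_⟩
    have : (⟨z, hz⟩ : affineSpan ℝ s) ∈ Metric.ball y ε := by
      simpa [Metric.mem_ball, Subtype.dist_eq] using hdz
    exact hb this
  · rintro ⟨hxs, ε, hε, hb⟩
    refine ⟨⟨x, subset_affineSpan ℝ s hxs⟩, ?_, rfl⟩
    rw [mem_interior_iff_mem_nhds, Metric.mem_nhds_iff]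
    exact ⟨ε, hε, fun z hz => hb z z.2 (by simpa [Subtype.dist_eq] using hz)⟩

lemma mem_span_of_mem {s : Set (Fin d → ℝ)} {x : Fin d → ℝ} (h : x ∈ s) :
    x ∈ (affineSpan ℝ s : Set (Fin d → ℝ)) := subset_affineSpan ℝ s h

lemma mem_span_add {s : Set (Fin d → ℝ)} {x v : Fin d → ℝ}
    (hx : x ∈ (affineSpan ℝ s : Set (Fin d → ℝ))) (hv : v ∈ (affineSpan ℝ s).direction) :
    x + v ∈ (affineSpan ℝ s : Set (Fin d → ℝ)) := by
  have := AffineSubspace.vadd_mem_of_mem_direction hv hx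
  simpa [add_comm] using this

lemma sub_mem_span_direction {s : Set (Fin d → ℝ)} {x y : Fin d → ℝ}
    (hx : x ∈ (affineSpan ℝ s : Set (Fin d → ℝ)))
    (hy : y ∈ (affineSpan ℝ s : Set (Fin d → ℝ))) :
    x - y ∈ (affineSpan ℝ s).direction :=
  AffineSubspace.vsub_mem_direction hx hy

/-- L1 : open segment from a relative interior point to a point of a convex set
stays in the relative interior. -/
lemma relint_openSegment {s : Set (Fin d → ℝ)} (hs : Convex ℝ s) {x y z : Fin d → ℝ}
    (hx : x ∈ intrinsicInterior ℝ s) (hy : y ∈ s) (hz : z ∈ openSegment ℝ x y) :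
    z ∈ intrinsicInterior ℝ s := by
  rw [relint_iff] at hx ⊢
  obtain ⟨hxs, ε, hε, hb⟩ := hx
  obtain ⟨a, b, ha, hb', hab, rfl⟩ := hz
  have hzs : a • x + b • y ∈ s := hs.openSegment_subset hxs hy ⟨a, b, ha, hb', hab, rfl⟩
  refine ⟨hzs, a * ε, by positivity, fun y' hy' hdy' => ?_⟩
  set z := a • x + b • y with hzdef
  have hx' : a⁻¹ • (y' - z) + x ∈ (affineSpan ℝ s : Set (Fin d → ℝ)) := by
    have h1 : y' - z ∈ (affineSpan ℝ s).direction :=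
      AffineSubspace.vsub_mem_direction hy' (mem_span_of_mem hzs)
    have h2 : a⁻¹ • (y' - z) ∈ (affineSpan ℝ s).direction := Submodule.smul_mem _ _ h1
    exact AffineSubspace.vadd_mem_of_mem_direction h2 (mem_span_of_mem hxs)
  have hdist : dist (a⁻¹ • (y' - z) + x) x < ε := by
    rw [dist_eq_norm] at hdy' ⊢
    rw [add_sub_cancel_right, norm_smul, norm_inv, Real.norm_of_nonneg ha.le]
    rw [inv_mul_lt_iff₀ ha]
    simpa [mul_comm] using hdy'
  have hxs' : a⁻¹ • (y' - z) + x ∈ s := hb _ hx' hdist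
  have : y' = a • (a⁻¹ • (y' - z) + x) + b • y := by
    rw [smul_add, smul_smul, mul_inv_cancel₀ ha.ne', one_smul, hzdef]
    abel
  rw [this]
  exact hs hxs' hy ha.le hb'.le hab

/-- Max principle: a linear functional bounded above on a convex set attaining
the bound at a relative interior point is constant. -/
lemma relint_max_principle {s : Set (Fin d → ℝ)} {x : Fin d → ℝ}
    (hx : x ∈ intrinsicInterior ℝ s) {g : (Fin d → ℝ) →ₗ[ℝ] ℝ} {b : ℝ}
    (hle : ∀ y ∈ s, g y ≤ b) (hxb : g x = b) : ∀ y ∈ s, g y = b := by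
  intro y hy
  rcases eq_or_ne x y with rfl | hne
  · exact hxb
  rw [relint_iff] at hx
  obtain ⟨hxs, ε, hε, hball⟩ := hx
  have hxy : ‖x - y‖ ≠ 0 := by
    simpa [sub_eq_zero] using hne
  have hxy' : (0:ℝ) < ‖x - y‖ := lt_of_le_of_ne (norm_nonneg _) (Ne.symm hxy)
  set t : ℝ := ε / (2 * ‖x - y‖) with ht
  have htpos : 0 < t := by positivity
  have hw : x + t • (x - y) ∈ s := by
    refine hball _ ?_ ?_
    · exact mem_span_add (mem_span_of_mem hxs)
        (Submodule.smul_mem _ _ (sub_mem_span_direction (mem_span_of_mem hxs)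
          (mem_span_of_mem hy)))
    · rw [dist_eq_norm, add_sub_cancel_left, norm_smul, Real.norm_of_nonneg htpos.le, ht]
      rw [div_mul_eq_mul_div, div_lt_iff₀ (by positivity)]
      nlinarith
  have := hle _ hw
  have hgw : g (x + t • (x - y)) = b + t * (b - g y) := by
    simp [map_add, map_smul, map_sub, hxb, smul_eq_mul]
  rw [hgw] at this
  have h2 : b - g y ≤ 0 := by nlinarith
  have := hle y hy
  linarith

/-- crossing point of a segment with a hyperplane. -/
lemma exists_cross {f : (Fin d → ℝ) →ₗ[ℝ] ℝ} {c : ℝ} {p q : Fin d → ℝ}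
    (hpc : f p < c) (hqc : c < f q) :
    ∃ t : ℝ, 0 < t ∧ t < 1 ∧ f (p + t • (q - p)) = c ∧
      p + t • (q - p) ∈ openSegment ℝ p q := by
  have hd : (0:ℝ) < f q - f p := by linarith
  refine ⟨(c - f p) / (f q - f p), div_pos (by linarith) hd, ?_, ?_, ?_⟩
  · rw [div_lt_one hd]; linarith
  · rw [map_add, map_smul, map_sub, smul_eq_mul, div_mul_cancel₀ _ hd.ne']
    ring
  · refine ⟨1 - (c - f p) / (f q - f p), (c - f p) / (f q - f p), ?_,
      div_pos (by linarith) hd, by ring, ?_⟩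
    · have : (c - f p) / (f q - f p) < 1 := by rw [div_lt_one hd]; linarith
      linarith
    · module


lemma polytope_convex {P : Set (Fin d → ℝ)} (h : IsPolytope P) : Convex ℝ P := by
  obtain ⟨k, f, c, rfl⟩ := h
  exact convex_iInter fun i => convex_halfSpace_le (f i).isLinear (c i)

lemma polytope_closed {P : Set (Fin d → ℝ)} (h : IsPolytope P) : IsClosed P := by
  obtain ⟨k, f, c, rfl⟩ := h
  exact isClosed_iInter fun i =>
    IsClosed.preimage (f i).continuous_of_finiteDimensional isClosed_Iic

lemma polytope_inter {P Q : Set (Fin d → ℝ)} (hP : IsPolytope P) (hQ : IsPolytope Q) :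
    IsPolytope (P ∩ Q) := by
  obtain ⟨k, f, c, rfl⟩ := hP
  obtain ⟨k', f', c', rfl⟩ := hQ
  refine ⟨k + k', Fin.append f f', Fin.append c c', ?_⟩
  ext x
  simp only [mem_inter_iff, mem_iInter, mem_setOf_eq]
  constructor
  · rintro ⟨h1, h2⟩ i
    refine Fin.addCases (fun j => ?_) (fun j => ?_) i
    · simpa [Fin.append_left] using h1 j
    · simpa [Fin.append_right] using h2 j
  · intro h
    refine ⟨fun j => ?_, fun j => ?_⟩
    · simpa [Fin.append_left] using h (Fin.castAdd _ j)
    · simpa [Fin.append_right] using h (Fin.natAdd _ j)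

lemma polytope_halfspace (f : (Fin d → ℝ) →ₗ[ℝ] ℝ) (c : ℝ) :
    IsPolytope {x | f x ≤ c} := by
  exact ⟨1, fun _ => f, fun _ => c, (Set.iInter_const _).symm⟩

lemma polytope_halfspace_ge (f : (Fin d → ℝ) →ₗ[ℝ] ℝ) (c : ℝ) :
    IsPolytope {x | c ≤ f x} := by
  refine ⟨1, fun _ => -f, fun _ => -c, ?_⟩
  rw [Set.iInter_const]
  ext x; simp

lemma polytope_hyperplane (f : (Fin d → ℝ) →ₗ[ℝ] ℝ) (c : ℝ) :
    IsPolytope {x | f x = c} := by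
  have : {x : Fin d → ℝ | f x = c} = {x | f x ≤ c} ∩ {x | c ≤ f x} := by
    ext x; simp [le_antisymm_iff]
  rw [this]
  exact polytope_inter (polytope_halfspace f c) (polytope_halfspace_ge f c)

lemma pdim_mono {s t : Set (Fin d → ℝ)} (h : s ⊆ t) : pdim s ≤ pdim t :=
  Submodule.finrank_mono (AffineSubspace.direction_le (affineSpan_mono ℝ h))

noncomputable def hyperAS (f : (Fin d → ℝ) →ₗ[ℝ] ℝ) (c : ℝ) : AffineSubspace ℝ (Fin d → ℝ) where
  carrier := {x | f x = c}
  smul_vsub_vadd_mem' := by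
    intro t p₁ p₂ p₃ h₁ h₂ h₃
    simp only [mem_setOf_eq] at *
    simp [vsub_eq_sub, vadd_eq_add, map_add, map_smul, map_sub, h₁, h₂, h₃]

lemma span_subset_hyperplane {s : Set (Fin d → ℝ)} {f : (Fin d → ℝ) →ₗ[ℝ] ℝ} {c : ℝ}
    (h : ∀ x ∈ s, f x = c) : (affineSpan ℝ s : Set (Fin d → ℝ)) ⊆ {x | f x = c} := by
  have h2 : affineSpan ℝ s ≤ hyperAS f c := affineSpan_le.2 (fun x hx => h x hx)
  exact fun x hx => h2 hx

lemma direction_span_le_ker {s : Set (Fin d → ℝ)} {f : (Fin d → ℝ) →ₗ[ℝ] ℝ} {c : ℝ}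
    (h : ∀ x ∈ s, f x = c) : (affineSpan ℝ s).direction ≤ LinearMap.ker f := by
  rw [direction_affineSpan]
  rw [vectorSpan_def]
  refine Submodule.span_le.2 ?_
  rintro v ⟨a, ha, b, hb, rfl⟩
  simp [LinearMap.mem_ker, vsub_eq_sub, map_sub, h a ha, h b hb]

lemma pdim_lt_of_hyperplane {s t : Set (Fin d → ℝ)} {f : (Fin d → ℝ) →ₗ[ℝ] ℝ} {c : ℝ}
    (hst : s ⊆ t) (hs : ∀ x ∈ s, f x = c) {z x : Fin d → ℝ} (hz : z ∈ t) (hzf : f z ≠ c)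
    (hx : x ∈ s) : pdim s < pdim t := by
  have h1 : (affineSpan ℝ s).direction < (affineSpan ℝ t).direction := by
    refine lt_of_le_of_ne (AffineSubspace.direction_le (affineSpan_mono ℝ hst)) ?_
    intro he
    have hv : z - x ∈ (affineSpan ℝ t).direction := by
      rw [direction_affineSpan]
      exact vsub_mem_vectorSpan ℝ hz (hst hx)
    rw [← he] at hv
    have := direction_span_le_ker hs hv
    rw [LinearMap.mem_ker, map_sub, hs x hx, sub_eq_zero] at this
    exact hzf this
  exact Submodule.finrank_lt_finrank_of_lt h1
section
variable {d : ℕ}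

/-- (i) span of the `≤` piece of a cut convex set equals the span. -/
lemma span_piece_eq {s : Set (Fin d → ℝ)} (hs : Convex ℝ s) {f : (Fin d → ℝ) →ₗ[ℝ] ℝ} {c : ℝ}
    {p q : Fin d → ℝ} (hp : p ∈ s) (hq : q ∈ s) (hpc : f p < c) (hqc : c < f q) :
    affineSpan ℝ (s ∩ {x | f x ≤ c}) = affineSpan ℝ s := by
  refine le_antisymm (affineSpan_mono ℝ inter_subset_left) (affineSpan_le.2 ?_)
  intro x hx
  by_cases hxc : f x ≤ c
  · exact subset_affineSpan ℝ _ ⟨hx, hxc⟩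
  push_neg at hxc
  obtain ⟨t, ht0, ht1, htc, hseg⟩ := exists_cross hpc hxc
  have hzs : p + t • (x - p) ∈ s := hs.openSegment_subset hp hx hseg
  have hz' : p + t • (x - p) ∈ affineSpan ℝ (s ∩ {x | f x ≤ c}) :=
    subset_affineSpan ℝ _ ⟨hzs, le_of_eq htc⟩
  have hp' : p ∈ affineSpan ℝ (s ∩ {x | f x ≤ c}) := subset_affineSpan ℝ _ ⟨hp, hpc.le⟩
  have hmem := AffineSubspace.smul_vsub_vadd_mem (affineSpan ℝ (s ∩ {x | f x ≤ c})) t⁻¹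
    hz' hp' hp'
  have : t⁻¹ • ((p + t • (x - p)) -ᵥ p) +ᵥ p = x := by
    rw [vsub_eq_sub, vadd_eq_add, add_sub_cancel_left, smul_smul, inv_mul_cancel₀ ht0.ne',
      one_smul]
    abel
  rwa [this] at hmem

lemma pdim_eq_of_span_eq {s t : Set (Fin d → ℝ)} (h : affineSpan ℝ s = affineSpan ℝ t) :
    pdim s = pdim t := by rw [pdim, pdim, h]

/-- (ii) relative interiors and span-preserving inclusions. -/
lemma relint_mono_span {s t : Set (Fin d → ℝ)} (hst : s ⊆ t)
    (hsp : affineSpan ℝ t ≤ affineSpan ℝ s) {x : Fin d → ℝ}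
    (hx : x ∈ intrinsicInterior ℝ s) : x ∈ intrinsicInterior ℝ t := by
  rw [relint_iff] at hx ⊢
  obtain ⟨hxs, ε, hε, hb⟩ := hx
  exact ⟨hst hxs, ε, hε, fun y hy hd => hst (hb y (hsp hy) hd)⟩

/-- (iv) a relint point on the hyperplane is in the relint of the slice. -/
lemma relint_slice_mem {s : Set (Fin d → ℝ)} {f : (Fin d → ℝ) →ₗ[ℝ] ℝ} {c : ℝ}
    {x : Fin d → ℝ} (hx : x ∈ intrinsicInterior ℝ s) (hxc : f x = c) :
    x ∈ intrinsicInterior ℝ (s ∩ {x | f x = c}) := by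
  rw [relint_iff] at hx ⊢
  obtain ⟨hxs, ε, hε, hb⟩ := hx
  refine ⟨⟨hxs, hxc⟩, ε, hε, fun y hy hd => ?_⟩
  have h1 : y ∈ {x | f x = c} :=
    span_subset_hyperplane (fun z hz => hz.2) hy
  have h2 : y ∈ (affineSpan ℝ s : Set (Fin d → ℝ)) := by
    have := affineSpan_mono ℝ (inter_subset_left (s := s) (t := {x | f x = c}))
    exact this hy
  exact ⟨hb y h2 hd, h1⟩

/-- (v) a relint point strictly inside the halfspace is in the relint of the piece. -/
lemma relint_half_mem {s : Set (Fin d → ℝ)} {f : (Fin d → ℝ) →ₗ[ℝ] ℝ} {c : ℝ}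
    {x : Fin d → ℝ} (hx : x ∈ intrinsicInterior ℝ s) (hxc : f x < c) :
    x ∈ intrinsicInterior ℝ (s ∩ {x | f x ≤ c}) := by
  rw [relint_iff] at hx ⊢
  obtain ⟨hxs, ε, hε, hb⟩ := hx
  have hopen : IsOpen {y : Fin d → ℝ | f y < c} :=
    isOpen_lt f.continuous_of_finiteDimensional continuous_const
  obtain ⟨δ, hδ, hball⟩ := Metric.isOpen_iff.1 hopen x hxc
  refine ⟨⟨hxs, hxc.le⟩, min ε δ, lt_min hε hδ, fun y hy hd => ?_⟩
  have h2 : y ∈ (affineSpan ℝ s : Set (Fin d → ℝ)) :=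
    affineSpan_mono ℝ (inter_subset_left (s := s) (t := {x | f x ≤ c})) hy
  have hd1 : dist y x < ε := lt_of_lt_of_le hd (min_le_left ε δ)
  have hd2 : dist y x < δ := lt_of_lt_of_le hd (min_le_right ε δ)
  have hyb : y ∈ Metric.ball x δ := Metric.mem_ball.2 hd2
  have : f y < c := hball hyb
  exact ⟨hb y h2 hd1, this.le⟩

/-- relint of the `≤` piece of a cut convex set lies strictly inside. -/
lemma relint_half_lt {s : Set (Fin d → ℝ)} (hs : Convex ℝ s) {f : (Fin d → ℝ) →ₗ[ℝ] ℝ} {c : ℝ}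
    {p q : Fin d → ℝ} (hp : p ∈ s) (hq : q ∈ s) (hpc : f p < c) (hqc : c < f q)
    {x : Fin d → ℝ} (hx : x ∈ intrinsicInterior ℝ (s ∩ {x | f x ≤ c})) : f x < c := by
  rw [relint_iff] at hx
  obtain ⟨hxs, ε, hε, hb⟩ := hx
  have hle2 : f x ≤ c := hxs.2
  rcases lt_or_eq_of_le hle2 with h | h
  · exact h
  exfalso
  set v : Fin d → ℝ := q - p with hv
  have hfv : 0 < f v := by rw [hv, map_sub]; linarith
  have hvd : v ∈ (affineSpan ℝ (s ∩ {x | f x ≤ c})).direction := by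
    rw [span_piece_eq hs hp hq hpc hqc]
    exact sub_mem_span_direction (mem_span_of_mem hq) (mem_span_of_mem hp)
  have hvne : ‖v‖ ≠ 0 := by
    intro h0
    rw [norm_eq_zero] at h0
    rw [h0] at hfv
    simp at hfv
  have hvpos : (0:ℝ) < ‖v‖ := lt_of_le_of_ne (norm_nonneg _) (Ne.symm hvne)
  set t : ℝ := ε / (2 * ‖v‖) with ht
  have htpos : 0 < t := by positivity
  have hmem : x + t • v ∈ s ∩ {x | f x ≤ c} := by
    refine hb _ (mem_span_add (mem_span_of_mem hxs) (Submodule.smul_mem _ _ hvd)) ?_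
    rw [dist_eq_norm, add_sub_cancel_left, norm_smul, Real.norm_of_nonneg htpos.le, ht]
    rw [div_mul_eq_mul_div, div_lt_iff₀ (by positivity)]
    nlinarith
  have : f (x + t • v) ≤ c := hmem.2
  rw [map_add, map_smul, smul_eq_mul, h] at this
  nlinarith

/-- (iii) relint of a slice is inside the relint, provided the hyperplane
crosses the set. -/
lemma relint_slice_subset {s : Set (Fin d → ℝ)} (hs : Convex ℝ s)
    {f : (Fin d → ℝ) →ₗ[ℝ] ℝ} {c : ℝ} {p q : Fin d → ℝ}
    (hp : p ∈ s) (hq : q ∈ s) (hpc : f p < c) (hqc : c < f q) :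
    intrinsicInterior ℝ (s ∩ {x | f x = c}) ⊆ intrinsicInterior ℝ s := by
  -- find a relint point of s on the hyperplane
  obtain ⟨r, hr⟩ := Set.Nonempty.intrinsicInterior hs ⟨p, hp⟩
  have hrs : r ∈ s := intrinsicInterior_subset hr
  have hz : ∃ z, z ∈ intrinsicInterior ℝ s ∧ f z = c := by
    rcases lt_trichotomy (f r) c with h | h | h
    · obtain ⟨t, ht0, ht1, htc, hseg⟩ := exists_cross h hqc
      exact ⟨_, relint_openSegment hs hr hq hseg, htc⟩
    · exact ⟨r, hr, h⟩
    · obtain ⟨t, ht0, ht1, htc, hseg⟩ := exists_cross hpc h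
      rw [openSegment_symm] at hseg
      exact ⟨_, relint_openSegment hs hr hp hseg, htc⟩
  obtain ⟨z, hzri, hzc⟩ := hz
  intro y hy
  rcases eq_or_ne y z with rfl | hne
  · exact hzri
  -- prolongation within the slice
  rw [relint_iff] at hy
  obtain ⟨hys, ε, hε, hb⟩ := hy
  have hyz : (0:ℝ) < ‖y - z‖ := by
    rw [norm_pos_iff, sub_ne_zero]
    exact hne
  set t : ℝ := ε / (2 * ‖y - z‖) with ht
  have htpos : 0 < t := by positivity
  have hzslice : z ∈ s ∩ {x | f x = c} := ⟨intrinsicInterior_subset hzri, hzc⟩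
  have hw : y + t • (y - z) ∈ s ∩ {x | f x = c} := by
    refine hb _ (mem_span_add (mem_span_of_mem hys)
      (Submodule.smul_mem _ _ (sub_mem_span_direction (mem_span_of_mem hys)
        (mem_span_of_mem hzslice)))) ?_
    rw [dist_eq_norm, add_sub_cancel_left, norm_smul, Real.norm_of_nonneg htpos.le, ht]
    rw [div_mul_eq_mul_div, div_lt_iff₀ (by positivity)]
    nlinarith
  clear_value t
  have hyseg : y ∈ openSegment ℝ z (y + t • (y - z)) := by
    have h1t : (0:ℝ) < 1 + t := by positivity
    refine ⟨t / (1 + t), 1 / (1 + t), by positivity, by positivity, ?_, ?_⟩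
    · field_simp
      ring
    · match_scalars <;> field_simp <;> ring
  exact relint_openSegment hs hzri hw.1 hyseg
end
section
variable {d : ℕ}

/-- Supporting hyperplane theorem at a non-relative-interior point. -/
lemma exists_supporting_hyperplane {s : Set (Fin d → ℝ)} (hs : Convex ℝ s)
    {x : Fin d → ℝ} (hx : x ∈ s) (hxr : x ∉ intrinsicInterior ℝ s) :
    ∃ (g : (Fin d → ℝ) →ₗ[ℝ] ℝ) (b : ℝ), g ≠ 0 ∧ (∀ y ∈ s, g y ≤ b) ∧ g x = b ∧
      ∃ z ∈ s, g z < b := by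
  classical
  set V := (affineSpan ℝ s).direction with hV
  set T : Set V := {v | (v : Fin d → ℝ) + x ∈ s} with hT
  have hTconv : Convex ℝ T := by
    intro u hu v hv a b ha hb hab
    show ((a • u + b • v : V) : Fin d → ℝ) + x ∈ s
    have hxx : (a + b) • x = x := by rw [hab, one_smul]
    have heq : ((a • u + b • v : V) : Fin d → ℝ) + x
        = a • ((u : Fin d → ℝ) + x) + b • ((v : Fin d → ℝ) + x) := by
      push_cast
      rw [smul_add, smul_add]
      nth_rewrite 1 [← hxx]
      module
    rw [heq]
    exact hs hu hv ha hb hab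
  obtain ⟨r, hr⟩ := Set.Nonempty.intrinsicInterior hs ⟨x, hx⟩
  have hrs : r ∈ s := intrinsicInterior_subset hr
  set v₀ : V := ⟨r - x, sub_mem_span_direction (mem_span_of_mem hrs) (mem_span_of_mem hx)⟩
    with hv₀
  have hv₀T : v₀ ∈ interior T := by
    rw [mem_interior_iff_mem_nhds, Metric.mem_nhds_iff]
    rw [relint_iff] at hr
    obtain ⟨-, ε, hε, hball⟩ := hr
    refine ⟨ε, hε, fun w hw => ?_⟩
    have h1 : (w : Fin d → ℝ) + x ∈ (affineSpan ℝ s : Set (Fin d → ℝ)) := by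
      have := mem_span_add (mem_span_of_mem hx) w.2
      rwa [add_comm] at this
    have h2 : dist ((w : Fin d → ℝ) + x) r < ε := by
      rw [Metric.mem_ball, Subtype.dist_eq] at hw
      rw [dist_eq_norm]
      have : (w : Fin d → ℝ) + x - r = (w : Fin d → ℝ) - v₀ := by
        rw [hv₀]; simp; abel
      rw [this]
      simpa [dist_eq_norm] using hw
    exact hball _ h1 h2
  have h0T : (0 : V) ∉ interior T := by
    intro h0
    rw [mem_interior_iff_mem_nhds, Metric.mem_nhds_iff] at h0
    obtain ⟨δ, hδ, hball⟩ := h0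
    apply hxr
    rw [relint_iff]
    refine ⟨hx, δ, hδ, fun y hy hd => ?_⟩
    have hyV : y - x ∈ V := sub_mem_span_direction hy (mem_span_of_mem hx)
    have : (⟨y - x, hyV⟩ : V) ∈ Metric.ball (0 : V) δ := by
      rw [Metric.mem_ball, Subtype.dist_eq]
      simpa [dist_eq_norm] using hd
    have := hball this
    rw [hT] at this
    simpa using this
  obtain ⟨φ, hφ⟩ := geometric_hahn_banach_open_point (hTconv.interior) isOpen_interior h0T
  have hφ0 : ∀ a ∈ interior T, φ a < 0 := by
    intro a ha
    have := hφ a ha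
    simpa using this
  have hφv₀ : φ v₀ < 0 := hφ0 _ hv₀T
  have hφT : ∀ a ∈ T, φ a ≤ 0 := by
    intro a ha
    by_contra hpos
    push_neg at hpos
    set A := φ a with hA
    set B := φ v₀ with hB
    set t : ℝ := A / (2 * (A - B)) with htdef
    have hAB : 0 < A - B := by linarith
    have ht0 : 0 < t := by positivity
    have ht1 : t < 1 := by
      rw [htdef, div_lt_one (by positivity)]
      linarith
    have hmem : t • v₀ + (1 - t) • a ∈ interior T :=
      Convex.combo_interior_closure_mem_interior hTconv hv₀T (subset_closure ha)
        ht0 (by linarith) (by ring)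
    have hlt := hφ0 _ hmem
    rw [map_add, map_smul, map_smul, smul_eq_mul, smul_eq_mul, ← hB, ← hA] at hlt
    have hval : t * B + (1 - t) * A = A - t * (A - B) := by ring
    have ht2 : t * (A - B) = A / 2 := by
      rw [htdef]
      field_simp
    linarith
  obtain ⟨q, hq⟩ := Submodule.exists_isCompl V
  set π := V.linearProjOfIsCompl q hq with hπ
  set g : (Fin d → ℝ) →ₗ[ℝ] ℝ := φ.toLinearMap.comp π with hg
  have key : ∀ (y) (hy : y ∈ s), g y - g x
      = φ ⟨y - x, sub_mem_span_direction (mem_span_of_mem hy) (mem_span_of_mem hx)⟩ := by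
    intro y hy
    have h1 : g y - g x = g (y - x) := by rw [map_sub]
    rw [h1, hg]
    simp only [LinearMap.comp_apply, ContinuousLinearMap.coe_coe]
    congr 1
    exact Submodule.linearProjOfIsCompl_apply_left hq
      ⟨y - x, sub_mem_span_direction (mem_span_of_mem hy) (mem_span_of_mem hx)⟩
  have hgr : g r < g x := by
    have h1 := key r hrs
    have h2 : (⟨r - x, sub_mem_span_direction (mem_span_of_mem hrs) (mem_span_of_mem hx)⟩ : V)
        = v₀ := rfl
    rw [h2] at h1
    linarith
  refine ⟨g, g x, ?_, ?_, rfl, r, hrs, hgr⟩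
  · intro h0
    rw [h0] at hgr
    simp at hgr
  · intro y hy
    have h1 := key y hy
    have hyT : (⟨y - x, sub_mem_span_direction (mem_span_of_mem hy) (mem_span_of_mem hx)⟩ : V)
        ∈ T := by
      show (y - x) + x ∈ s
      simpa [sub_add_cancel] using hy
    have := hφT _ hyT
    linarith
end
section
variable {d : ℕ} {U : Set (Fin d → ℝ)} {𝒞 : Set (Set (Fin d → ℝ))}

/-- M0 : descend to a cell whose relative interior contains `x`. -/
lemma descend_aux (hCS : IsCellStructure U 𝒞) :
    ∀ (k : ℕ) (G : Set (Fin d → ℝ)), G ∈ 𝒞 → pdim G ≤ k → ∀ x ∈ G,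
      ∃ H ∈ 𝒞, H ⊆ G ∧ x ∈ intrinsicInterior ℝ H := by
  intro k
  induction k with
  | zero =>
    intro G hG hdim x hx
    by_cases hri : x ∈ intrinsicInterior ℝ G
    · exact ⟨G, hG, subset_rfl, hri⟩
    obtain ⟨g, b, hg0, hsupp, hgx, z, hz, hzb⟩ :=
      exists_supporting_hyperplane (polytope_convex (hCS.polytope G hG)) hx hri
    have : pdim (G ∩ {y | g y = b}) < pdim G :=
      pdim_lt_of_hyperplane inter_subset_left (fun y hy => hy.2) hz hzb.ne ⟨hx, hgx⟩
    omega
  | succ k ih =>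
    intro G hG hdim x hx
    by_cases hri : x ∈ intrinsicInterior ℝ G
    · exact ⟨G, hG, subset_rfl, hri⟩
    obtain ⟨g, b, hg0, hsupp, hgx, z, hz, hzb⟩ :=
      exists_supporting_hyperplane (polytope_convex (hCS.polytope G hG)) hx hri
    have hface : IsFaceOf (G ∩ {y | g y = b}) G := ⟨g, b, hg0, hsupp, rfl⟩
    obtain ⟨𝒮, h𝒮, hun⟩ := hCS.faces G hG _ hface
    have hxF : x ∈ G ∩ {y | g y = b} := ⟨hx, hgx⟩
    rw [hun] at hxF
    obtain ⟨H₁, hH₁𝒮, hxH₁⟩ := hxF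
    have hH₁sub : H₁ ⊆ G ∩ {y | g y = b} := by
      rw [hun]; exact subset_sUnion_of_mem hH₁𝒮
    have hdimlt : pdim (G ∩ {y | g y = b}) < pdim G :=
      pdim_lt_of_hyperplane inter_subset_left (fun y hy => hy.2) hz hzb.ne ⟨hx, hgx⟩
    have hH₁dim : pdim H₁ ≤ k := by
      have := pdim_mono hH₁sub
      omega
    obtain ⟨H, hH, hHsub, hHri⟩ := ih H₁ (h𝒮 hH₁𝒮) hH₁dim x hxH₁
    exact ⟨H, hH, hHsub.trans (hH₁sub.trans inter_subset_left), hHri⟩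

lemma descend (hCS : IsCellStructure U 𝒞) {G : Set (Fin d → ℝ)} (hG : G ∈ 𝒞)
    {x : Fin d → ℝ} (hx : x ∈ G) :
    ∃ H ∈ 𝒞, H ⊆ G ∧ x ∈ intrinsicInterior ℝ H :=
  descend_aux hCS (pdim G) G hG le_rfl x hx

/-- M1 : relative interiors of cells cover `U`. -/
lemma relint_cover (hCS : IsCellStructure U 𝒞) {x : Fin d → ℝ} (hx : x ∈ U) :
    ∃ H ∈ 𝒞, x ∈ intrinsicInterior ℝ H := by
  rw [← hCS.cover] at hx
  obtain ⟨G, hG, hxG⟩ := hx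
  obtain ⟨H, hH, -, hri⟩ := descend hCS hG hxG
  exact ⟨H, hH, hri⟩

/-- M2 : a cell is contained in any cell meeting its relative interior. -/
lemma cell_subset_of_relint_mem (hCS : IsCellStructure U 𝒞)
    {H E : Set (Fin d → ℝ)} (hH : H ∈ 𝒞) (hE : E ∈ 𝒞) {x : Fin d → ℝ}
    (hx : x ∈ intrinsicInterior ℝ H) (hxE : x ∈ E) : H ⊆ E := by
  obtain ⟨𝒮, h𝒮, hun⟩ := hCS.inter H hH E hE
  have hxHE : x ∈ H ∩ E := ⟨intrinsicInterior_subset hx, hxE⟩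
  rw [hun] at hxHE
  obtain ⟨G', hG'𝒮, hxG'⟩ := hxHE
  obtain ⟨Hs, hHs, hHssub, hHsri⟩ := descend hCS (h𝒮 hG'𝒮) hxG'
  have hEq : Hs = H := by
    by_contra hne
    have hdisj := hCS.relint_disjoint Hs hHs H hH hne
    have : x ∈ intrinsicInterior ℝ Hs ∩ intrinsicInterior ℝ H := ⟨hHsri, hx⟩
    rw [hdisj] at this
    exact this
  have : H ⊆ G' := hEq ▸ hHssub
  have hG'HE : G' ⊆ H ∩ E := by rw [hun]; exact subset_sUnion_of_mem hG'𝒮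
  exact this.trans (hG'HE.trans inter_subset_right)
end
section
variable {d : ℕ}

def Cut {d : ℕ} (Ω : Set (Fin d → ℝ)) (f : (Fin d → ℝ) →ₗ[ℝ] ℝ) (c : ℝ)
    (E : Set (Fin d → ℝ)) : Prop :=
  E ⊆ Ω ∧ (E ∩ {x | f x < c}).Nonempty ∧ (E ∩ {x | c < f x}).Nonempty

def newCells {d : ℕ} (𝒞 : Set (Set (Fin d → ℝ))) (Ω : Set (Fin d → ℝ))
    (f : (Fin d → ℝ) →ₗ[ℝ] ℝ) (c : ℝ) : Set (Set (Fin d → ℝ)) :=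
  {E ∈ 𝒞 | ¬ Cut Ω f c E} ∪
    ⋃ E ∈ {E ∈ 𝒞 | Cut Ω f c E},
      {E ∩ {x | f x = c}, E ∩ {x | f x ≤ c}, E ∩ {x | c ≤ f x}}

variable {𝒞 : Set (Set (Fin d → ℝ))} {Ω : Set (Fin d → ℝ)}
  {f : (Fin d → ℝ) →ₗ[ℝ] ℝ} {c : ℝ}

lemma mem_newCells_iff {D : Set (Fin d → ℝ)} :
    D ∈ newCells 𝒞 Ω f c ↔ (D ∈ 𝒞 ∧ ¬ Cut Ω f c D) ∨
      ∃ E, E ∈ 𝒞 ∧ Cut Ω f c E ∧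
        (D = E ∩ {x | f x = c} ∨ D = E ∩ {x | f x ≤ c} ∨ D = E ∩ {x | c ≤ f x}) := by
  constructor
  · rintro (h | h)
    · exact Or.inl h
    · simp only [mem_iUnion, exists_prop, mem_setOf_eq, mem_insert_iff,
        mem_singleton_iff] at h
      obtain ⟨E, ⟨hE, hcut⟩, hD⟩ := h
      exact Or.inr ⟨E, hE, hcut, hD⟩
  · rintro (h | ⟨E, hE, hcut, hD⟩)
    · exact Or.inl h
    · right
      simp only [mem_iUnion, exists_prop, mem_setOf_eq, mem_insert_iff,
        mem_singleton_iff]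
      exact ⟨E, ⟨hE, hcut⟩, hD⟩

lemma set_ge_eq_neg : {x : Fin d → ℝ | c ≤ f x} = {x | (-f) x ≤ -c} := by
  ext x; simp

lemma set_eq_eq_neg : {x : Fin d → ℝ | f x = c} = {x | (-f) x = -c} := by
  ext x; simp [neg_eq_iff_eq_neg, eq_comm]

/-- facts about a cut convex set -/
lemma span_ge_eq {E : Set (Fin d → ℝ)} (hconv : Convex ℝ E) {p q : Fin d → ℝ}
    (hp : p ∈ E) (hq : q ∈ E) (hpc : f p < c) (hqc : c < f q) :
    affineSpan ℝ (E ∩ {x | c ≤ f x}) = affineSpan ℝ E := by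
  rw [set_ge_eq_neg]
  exact span_piece_eq hconv hq hp (by simp [hqc]) (by simp [hpc])

lemma relint_ge_mem {s : Set (Fin d → ℝ)} {x : Fin d → ℝ}
    (hx : x ∈ intrinsicInterior ℝ s) (hxc : c < f x) :
    x ∈ intrinsicInterior ℝ (s ∩ {x | c ≤ f x}) := by
  rw [set_ge_eq_neg]
  exact relint_half_mem hx (by simp [hxc])

lemma relint_ge_lt {s : Set (Fin d → ℝ)} (hs : Convex ℝ s) {p q : Fin d → ℝ}
    (hp : p ∈ s) (hq : q ∈ s) (hpc : f p < c) (hqc : c < f q)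
    {x : Fin d → ℝ} (hx : x ∈ intrinsicInterior ℝ (s ∩ {x | c ≤ f x})) : c < f x := by
  rw [set_ge_eq_neg] at hx
  have := relint_half_lt hs hq hp (by simp [hqc]) (by simp [hpc]) hx
  simp at this
  exact this

lemma relint_ge_subset {s : Set (Fin d → ℝ)} (hs : Convex ℝ s) {p q : Fin d → ℝ}
    (hp : p ∈ s) (hq : q ∈ s) (hpc : f p < c) (hqc : c < f q) :
    intrinsicInterior ℝ (s ∩ {x | c ≤ f x}) ⊆ intrinsicInterior ℝ s := by
  refine fun x hx => relint_mono_span inter_subset_left ?_ hx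
  rw [span_ge_eq hs hp hq hpc hqc]

lemma relint_le_subset {s : Set (Fin d → ℝ)} (hs : Convex ℝ s) {p q : Fin d → ℝ}
    (hp : p ∈ s) (hq : q ∈ s) (hpc : f p < c) (hqc : c < f q) :
    intrinsicInterior ℝ (s ∩ {x | f x ≤ c}) ⊆ intrinsicInterior ℝ s := by
  refine fun x hx => relint_mono_span inter_subset_left ?_ hx
  rw [span_piece_eq hs hp hq hpc hqc]

lemma relint_eq_subset {s : Set (Fin d → ℝ)} (hs : Convex ℝ s) {p q : Fin d → ℝ}
    (hp : p ∈ s) (hq : q ∈ s) (hpc : f p < c) (hqc : c < f q) :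
    intrinsicInterior ℝ (s ∩ {x | f x = c}) ⊆ intrinsicInterior ℝ s :=
  relint_slice_subset hs hp hq hpc hqc

lemma pdim_le_eq {s : Set (Fin d → ℝ)} (hs : Convex ℝ s) {p q : Fin d → ℝ}
    (hp : p ∈ s) (hq : q ∈ s) (hpc : f p < c) (hqc : c < f q) :
    pdim (s ∩ {x | f x ≤ c}) = pdim s :=
  pdim_eq_of_span_eq (span_piece_eq hs hp hq hpc hqc)

lemma pdim_ge_eq {s : Set (Fin d → ℝ)} (hs : Convex ℝ s) {p q : Fin d → ℝ}
    (hp : p ∈ s) (hq : q ∈ s) (hpc : f p < c) (hqc : c < f q) :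
    pdim (s ∩ {x | c ≤ f x}) = pdim s :=
  pdim_eq_of_span_eq (span_ge_eq hs hp hq hpc hqc)

lemma pdim_slice_lt {s : Set (Fin d → ℝ)} (hs : Convex ℝ s) {p q : Fin d → ℝ}
    (hp : p ∈ s) (hq : q ∈ s) (hpc : f p < c) (hqc : c < f q) :
    pdim (s ∩ {x | f x = c}) < pdim s := by
  obtain ⟨t, ht0, ht1, htc, hseg⟩ := exists_cross hpc hqc
  have hzs : p + t • (q - p) ∈ s := hs.openSegment_subset hp hq hseg
  exact pdim_lt_of_hyperplane inter_subset_left (fun y hy => hy.2) hq hqc.ne' ⟨hzs, htc⟩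

end
section
variable {d : ℕ} {U : Set (Fin d → ℝ)} {𝒞 : Set (Set (Fin d → ℝ))} {Ω : Set (Fin d → ℝ)}
  {f : (Fin d → ℝ) →ₗ[ℝ] ℝ} {c : ℝ}

lemma covkey (hCS : IsCellStructure U 𝒞) {x : Fin d → ℝ} (hx : x ∈ U) :
    ∃ K ∈ newCells 𝒞 Ω f c, x ∈ intrinsicInterior ℝ K ∧
      (∀ E ∈ 𝒞, x ∈ E → K ⊆ E) ∧
      (K ⊆ Ω → (f x ≤ c → K ⊆ {y | f y ≤ c}) ∧ (c ≤ f x → K ⊆ {y | c ≤ f y})) := by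
  obtain ⟨H, hH, hri⟩ := relint_cover hCS hx
  have hHx : x ∈ H := intrinsicInterior_subset hri
  have hKsub : ∀ K : Set (Fin d → ℝ), K ⊆ H → ∀ E ∈ 𝒞, x ∈ E → K ⊆ E :=
    fun K hKH E hE hxE => hKH.trans (cell_subset_of_relint_mem hCS hH hE hri hxE)
  by_cases hcut : Cut Ω f c H
  · obtain ⟨hHΩ, hne1, hne2⟩ := hcut
    rcases lt_trichotomy (f x) c with hlt | heq | hgt
    · refine ⟨H ∩ {y | f y ≤ c}, ?_, relint_half_mem hri hlt,
        hKsub _ inter_subset_left, fun _ => ⟨fun _ => inter_subset_right,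
          fun hc => absurd hlt (not_lt.2 hc)⟩⟩
      rw [mem_newCells_iff]
      exact Or.inr ⟨H, hH, ⟨hHΩ, hne1, hne2⟩, Or.inr (Or.inl rfl)⟩
    · refine ⟨H ∩ {y | f y = c}, ?_, relint_slice_mem hri heq,
        hKsub _ inter_subset_left, fun _ => ⟨fun _ y hy => le_of_eq hy.2,
          fun _ y hy => ge_of_eq hy.2⟩⟩
      rw [mem_newCells_iff]
      exact Or.inr ⟨H, hH, ⟨hHΩ, hne1, hne2⟩, Or.inl rfl⟩
    · refine ⟨H ∩ {y | c ≤ f y}, ?_, relint_ge_mem hri hgt,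
        hKsub _ inter_subset_left, fun _ => ⟨fun hc => absurd hgt (not_lt.2 hc),
          fun _ => inter_subset_right⟩⟩
      rw [mem_newCells_iff]
      exact Or.inr ⟨H, hH, ⟨hHΩ, hne1, hne2⟩, Or.inr (Or.inr rfl)⟩
  · refine ⟨H, ?_, hri, hKsub _ subset_rfl, ?_⟩
    · rw [mem_newCells_iff]; exact Or.inl ⟨hH, hcut⟩
    intro hKΩ
    have h2 : ¬((H ∩ {y | f y < c}).Nonempty ∧ (H ∩ {y | c < f y}).Nonempty) :=
      fun hB => hcut ⟨hKΩ, hB.1, hB.2⟩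
    have honeside : H ⊆ {y | f y ≤ c} ∨ H ⊆ {y | c ≤ f y} := by
      rcases not_and_or.1 h2 with h3 | h3
      · right
        intro y hy
        by_contra hy'
        exact h3 ⟨y, hy, show f y < c from lt_of_not_ge hy'⟩
      · left
        intro y hy
        by_contra hy'
        exact h3 ⟨y, hy, show c < f y from lt_of_not_ge hy'⟩
    constructor
    · intro hxc
      rcases honeside with h | h
      · exact h
      · -- f ≥ c on H and f x = c at relint point: H ⊆ {f = c} ⊆ {f ≤ c}
        have hb : ∀ y ∈ H, (-f) y ≤ -c := fun y hy => by
          simpa using neg_le_neg (show c ≤ f y from h hy)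
        have hxb : (-f) x = -c := by
          have : f x = c := le_antisymm hxc (h hHx)
          simp [this]
        have hconst := relint_max_principle hri hb hxb
        intro y hy
        have := hconst y hy
        simp only [LinearMap.neg_apply, neg_inj] at this
        exact le_of_eq this
    · intro hxc
      rcases honeside with h | h
      · have hconst := relint_max_principle hri h (le_antisymm (h hHx) hxc)
        intro y hy
        exact ge_of_eq (hconst y hy)
      · exact h

lemma piece_le {K : Set (Fin d → ℝ)} {x : Fin d → ℝ}
    (hKsub : ∀ E ∈ 𝒞, x ∈ E → K ⊆ E)
    (hsides : K ⊆ Ω → (f x ≤ c → K ⊆ {y | f y ≤ c}) ∧ (c ≤ f x → K ⊆ {y | c ≤ f y}))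
    {C : Set (Fin d → ℝ)} (hC : C ∈ newCells 𝒞 Ω f c) (hxC : x ∈ C) : K ⊆ C := by
  rw [mem_newCells_iff] at hC
  rcases hC with ⟨hC𝒞, -⟩ | ⟨E, hE, hcut, hD⟩
  · exact hKsub C hC𝒞 hxC
  have hxE : x ∈ E := by rcases hD with rfl | rfl | rfl <;> exact hxC.1
  have hKE : K ⊆ E := hKsub E hE hxE
  have hKΩ : K ⊆ Ω := hKE.trans hcut.1
  obtain ⟨hle, hge⟩ := hsides hKΩ
  rcases hD with rfl | rfl | rfl
  · have h1 : f x = c := hxC.2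
    have hK1 := hle h1.le
    have hK2 := hge h1.ge
    exact subset_inter hKE (fun y hy => le_antisymm (hK1 hy) (hK2 hy))
  · exact subset_inter hKE (hle hxC.2)
  · exact subset_inter hKE (hge hxC.2)
end
section
variable {d : ℕ} {U : Set (Fin d → ℝ)} {𝒞 : Set (Set (Fin d → ℝ))}

lemma pdim_le_of_subset_span {s t : Set (Fin d → ℝ)}
    (h : s ⊆ (affineSpan ℝ t : Set (Fin d → ℝ))) : pdim s ≤ pdim t := by
  have h1 : affineSpan ℝ s ≤ affineSpan ℝ t := by
    have := affineSpan_mono ℝ h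
    rwa [AffineSubspace.affineSpan_coe] at this
  exact Submodule.finrank_mono (AffineSubspace.direction_le h1)

lemma span_eq_of_le_of_pdim_le {s t : Set (Fin d → ℝ)} (hst : s ⊆ t)
    (hdim : pdim t ≤ pdim s) (hne : s.Nonempty) :
    affineSpan ℝ s = affineSpan ℝ t := by
  obtain ⟨x, hx⟩ := hne
  have hle : affineSpan ℝ s ≤ affineSpan ℝ t := affineSpan_mono ℝ hst
  have hdir : (affineSpan ℝ s).direction = (affineSpan ℝ t).direction :=
    Submodule.eq_of_le_of_finrank_le (AffineSubspace.direction_le hle) hdim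
  refine AffineSubspace.ext_of_direction_eq hdir ?_
  exact ⟨x, mem_span_of_mem hx, mem_span_of_mem (hst hx)⟩

lemma pdim_lt_of_not_mem_span {s t : Set (Fin d → ℝ)} (hst : s ⊆ t) (hne : s.Nonempty)
    {w : Fin d → ℝ} (hw : w ∈ t) (hwn : w ∉ (affineSpan ℝ s : Set (Fin d → ℝ))) :
    pdim s < pdim t := by
  rcases lt_or_ge (pdim s) (pdim t) with h | h
  · exact h
  exfalso
  have := span_eq_of_le_of_pdim_le hst h hne
  exact hwn (this ▸ mem_span_of_mem hw)

lemma phi_aux (hCS : IsCellStructure U 𝒞) :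
    ∀ (m : ℕ) (D : Set (Fin d → ℝ)), D ∈ 𝒞 → pdim D ≤ m →
      ∀ E ∈ 𝒞, E ⊆ D → pdim E < pdim D →
      ∀ z ∈ intrinsicInterior ℝ E,
      ∃ D' ∈ 𝒞, D' ⊆ D ∧ E ⊆ D' ∧ pdim E < pdim D' ∧
        ∃ g : (Fin d → ℝ) →ₗ[ℝ] ℝ, ∃ b : ℝ, g ≠ 0 ∧ (∀ y ∈ D', g y ≤ b) ∧
          E ⊆ D' ∩ {y | g y = b} ∧ pdim (D' ∩ {y | g y = b}) = pdim E := by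
  intro m
  induction m with
  | zero => intro D hD hdim E hE hsub hlt z hz; omega
  | succ m ih =>
    intro D hD hdim E hE hsub hlt z hz
    have hzE : z ∈ E := intrinsicInterior_subset hz
    have hzD : z ∈ D := hsub hzE
    have hzri : z ∉ intrinsicInterior ℝ D := by
      intro hri
      have h1 := cell_subset_of_relint_mem hCS hD hE hri hzE
      have := pdim_mono h1
      omega
    obtain ⟨g, b, hg0, hsupp, hgz, w, hwD, hwb⟩ :=
      exists_supporting_hyperplane (polytope_convex (hCS.polytope D hD)) hzD hzri
    have hEF : E ⊆ D ∩ {y | g y = b} := by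
      have hconst := relint_max_principle hz (fun y hy => hsupp y (hsub hy)) hgz
      exact fun y hy => ⟨hsub hy, hconst y hy⟩
    have hFlt : pdim (D ∩ {y | g y = b}) < pdim D :=
      pdim_lt_of_hyperplane inter_subset_left (fun y hy => hy.2) hwD hwb.ne ⟨hzD, hgz⟩
    have hFge : pdim E ≤ pdim (D ∩ {y | g y = b}) := pdim_mono hEF
    rcases eq_or_lt_of_le hFge with heq | hltF
    · exact ⟨D, hD, subset_rfl, hsub, hlt, g, b, hg0, hsupp, hEF, heq.symm⟩
    have hDconv := polytope_convex (hCS.polytope D hD)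
    have hF₁conv : Convex ℝ (D ∩ {y | g y = b}) :=
      hDconv.inter (convex_hyperplane g.isLinear b)
    have hyex : ∃ y ∈ D ∩ {y | g y = b}, y ∉ (affineSpan ℝ E : Set (Fin d → ℝ)) := by
      by_contra hcon
      push_neg at hcon
      exact absurd (pdim_le_of_subset_span hcon) (not_le.2 hltF)
    obtain ⟨y, hyF, hyn⟩ := hyex
    have hwk : ∀ k : ℕ, z + (1/(k+1) : ℝ) • (y - z) ∈ D ∩ {y | g y = b} ∧
        z + (1/(k+1) : ℝ) • (y - z) ∉ (affineSpan ℝ E : Set (Fin d → ℝ)) := by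
      intro k
      have hk1 : (0:ℝ) < k + 1 := by positivity
      have ht0 : (0:ℝ) < 1/(k+1) := by positivity
      have ht1 : (1/(k+1) : ℝ) ≤ 1 := by
        rw [div_le_one hk1]
        linarith [Nat.cast_nonneg (α := ℝ) k]
      constructor
      · have hcombo := hF₁conv ⟨hzD, hgz⟩ hyF (a := 1 - 1/(k+1)) (b := 1/(k+1))
          (by linarith) ht0.le (by ring)
        have heq2 : (1 - 1/(k+1) : ℝ) • z + (1/(k+1) : ℝ) • y
            = z + (1/(k+1) : ℝ) • (y - z) := by module
        rwa [heq2] at hcombo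
      · intro hmem
        apply hyn
        have hv : (z + (1/(k+1) : ℝ) • (y - z)) - z ∈ (affineSpan ℝ E).direction :=
          sub_mem_span_direction hmem (mem_span_of_mem hzE)
        have hv2 : ((k+1 : ℝ)) • ((z + (1/(k+1) : ℝ) • (y - z)) - z)
            ∈ (affineSpan ℝ E).direction := Submodule.smul_mem _ _ hv
        have heq3 : z + ((k+1 : ℝ)) • ((z + (1/(k+1) : ℝ) • (y - z)) - z) = y := by
          rw [add_sub_cancel_left, smul_smul]
          rw [mul_one_div, div_self hk1.ne', one_smul]
          abel
        have := mem_span_add (mem_span_of_mem hzE) hv2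
        rwa [heq3] at this
    have hwkU : ∀ k : ℕ, z + (1/(k+1) : ℝ) • (y - z) ∈ U := by
      intro k
      have hDU : D ⊆ U := by rw [← hCS.cover]; exact subset_sUnion_of_mem hD
      exact hDU (hwk k).1.1
    have hch : ∀ k : ℕ, ∃ K, K ∈ 𝒞 ∧
        z + (1/(k+1) : ℝ) • (y - z) ∈ intrinsicInterior ℝ K :=
      fun k => relint_cover hCS (hwkU k)
    choose K hK1 hK2 using hch
    haveI : Finite ↥𝒞 := hCS.finite.to_subtype
    obtain ⟨⟨Kst, hKst⟩, hfib⟩ :=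
      Finite.exists_infinite_fiber (fun k => (⟨K k, hK1 k⟩ : ↥𝒞))
    have hinf : {k : ℕ | K k = Kst}.Infinite := by
      have hseteq : (fun k => (⟨K k, hK1 k⟩ : ↥𝒞)) ⁻¹' {⟨Kst, hKst⟩} = {k : ℕ | K k = Kst} := by
        ext k
        simp [Subtype.ext_iff]
      rw [← hseteq]
      exact Set.infinite_coe_iff.mp hfib
    have hunb : ∀ N : ℕ, ∃ k, K k = Kst ∧ N ≤ k := by
      intro N
      by_contra hcon
      push_neg at hcon
      refine hinf ((Set.finite_Iio N).subset ?_)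
      intro k hk
      exact hcon k hk
    have hzK : z ∈ Kst := by
      have hclosed : IsClosed Kst := polytope_closed (hCS.polytope _ hKst)
      rw [← hclosed.closure_eq, Metric.mem_closure_iff]
      intro ε hε
      obtain ⟨N, hN⟩ := exists_nat_gt (‖y - z‖ / ε)
      obtain ⟨k, hk1, hk2⟩ := hunb N
      refine ⟨z + (1/(k+1) : ℝ) • (y - z), ?_, ?_⟩
      · rw [← hk1]
        exact intrinsicInterior_subset (hK2 k)
      · rw [dist_comm, dist_eq_norm, add_sub_cancel_left, norm_smul]
        have hk1' : (0:ℝ) < k + 1 := by positivity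
        rw [Real.norm_of_nonneg (by positivity)]
        have hNk : (N:ℝ) ≤ k := Nat.cast_le.2 hk2
        have hyz0 : (0:ℝ) ≤ ‖y - z‖ := norm_nonneg _
        have h5 : ‖y - z‖ / ε < N := hN
        rw [div_lt_iff₀ hε] at h5
        rw [one_div, inv_mul_lt_iff₀ hk1']
        nlinarith
    have hEK : E ⊆ Kst := cell_subset_of_relint_mem hCS hE hKst hz hzK
    obtain ⟨k₀, hk₀, -⟩ := hunb 0
    have hw₀K : z + (1/(k₀+1) : ℝ) • (y - z) ∈ Kst := by
      rw [← hk₀]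
      exact intrinsicInterior_subset (hK2 k₀)
    have hEne : E.Nonempty := ⟨z, hzE⟩
    have h1 : pdim E < pdim Kst := pdim_lt_of_not_mem_span hEK hEne hw₀K (hwk k₀).2
    have hKD : Kst ⊆ D := by
      have h2 := cell_subset_of_relint_mem hCS (hK1 k₀) hD (hK2 k₀) ((hwk k₀).1.1)
      rwa [hk₀] at h2
    have h2 : pdim Kst < pdim D := by
      rcases lt_or_ge (pdim Kst) (pdim D) with h | h
      · exact h
      exfalso
      have hspan := span_eq_of_le_of_pdim_le hKD h ⟨z, hzK⟩
      have hwri : z + (1/(k₀+1) : ℝ) • (y - z) ∈ intrinsicInterior ℝ D :=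
        relint_mono_span hKD (le_of_eq hspan.symm) (by rw [← hk₀]; exact hK2 k₀)
      have hconst := relint_max_principle hwri hsupp ((hwk k₀).1.2)
      exact absurd (hconst w hwD) hwb.ne
    obtain ⟨D', hD', hD'sub, hED', hdim', rest⟩ := ih Kst hKst (by omega) E hE hEK h1 z hz
    exact ⟨D', hD', hD'sub.trans hKD, hED', hdim', rest⟩
end
section
variable {d : ℕ} {f : (Fin d → ℝ) →ₗ[ℝ] ℝ} {c : ℝ} {Ω : Set (Fin d → ℝ)}

lemma isFaceOf_piece_le {E F : Set (Fin d → ℝ)} (hF : IsFaceOf F E) :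
    IsFaceOf (F ∩ {x | f x ≤ c}) (E ∩ {x | f x ≤ c}) := by
  obtain ⟨g, b, hg0, hsupp, rfl⟩ := hF
  refine ⟨g, b, hg0, fun x hx => hsupp x hx.1, ?_⟩
  ext x
  simp only [mem_inter_iff, mem_setOf_eq]
  tauto

lemma isFaceOf_piece_ge {E F : Set (Fin d → ℝ)} (hF : IsFaceOf F E) :
    IsFaceOf (F ∩ {x | c ≤ f x}) (E ∩ {x | c ≤ f x}) := by
  obtain ⟨g, b, hg0, hsupp, rfl⟩ := hF
  refine ⟨g, b, hg0, fun x hx => hsupp x hx.1, ?_⟩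
  ext x
  simp only [mem_inter_iff, mem_setOf_eq]
  tauto

lemma isFaceOf_subset_le {E F : Set (Fin d → ℝ)} (hF : IsFaceOf F E)
    (hsub : F ⊆ {x | f x ≤ c}) : IsFaceOf F (E ∩ {x | f x ≤ c}) := by
  obtain ⟨g, b, hg0, hsupp, rfl⟩ := hF
  refine ⟨g, b, hg0, fun x hx => hsupp x hx.1, ?_⟩
  ext x
  simp only [mem_inter_iff, mem_setOf_eq]
  constructor
  · intro hx
    exact ⟨⟨hx.1, hsub hx⟩, hx.2⟩
  · intro hx
    exact ⟨hx.1.1, hx.2⟩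

lemma isFaceOf_subset_ge {E F : Set (Fin d → ℝ)} (hF : IsFaceOf F E)
    (hsub : F ⊆ {x | c ≤ f x}) : IsFaceOf F (E ∩ {x | c ≤ f x}) := by
  obtain ⟨g, b, hg0, hsupp, rfl⟩ := hF
  refine ⟨g, b, hg0, fun x hx => hsupp x hx.1, ?_⟩
  ext x
  simp only [mem_inter_iff, mem_setOf_eq]
  constructor
  · intro hx
    exact ⟨⟨hx.1, hsub hx⟩, hx.2⟩
  · intro hx
    exact ⟨hx.1.1, hx.2⟩

lemma isFaceOf_slice_le {E : Set (Fin d → ℝ)} (hf : f ≠ 0) :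
    IsFaceOf (E ∩ {x | f x = c}) (E ∩ {x | f x ≤ c}) := by
  refine ⟨f, c, hf, fun x hx => hx.2, ?_⟩
  ext x
  simp only [mem_inter_iff, mem_setOf_eq]
  constructor
  · intro hx
    exact ⟨⟨hx.1, hx.2.le⟩, hx.2⟩
  · intro hx
    exact ⟨hx.1.1, hx.2⟩

lemma isFaceOf_slice_ge {E : Set (Fin d → ℝ)} (hf : f ≠ 0) :
    IsFaceOf (E ∩ {x | f x = c}) (E ∩ {x | c ≤ f x}) := by
  refine ⟨-f, -c, by simpa using hf, fun x hx => by simpa using hx.2, ?_⟩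
  ext x
  simp only [mem_inter_iff, mem_setOf_eq, LinearMap.neg_apply, neg_eq_iff_eq_neg, neg_neg]
  constructor
  · intro hx
    exact ⟨⟨hx.1, hx.2.ge⟩, hx.2⟩
  · intro hx
    exact ⟨hx.1.1, hx.2⟩

lemma not_cut_sides {C : Set (Fin d → ℝ)} (hnc : ¬ Cut Ω f c C) (hCΩ : C ⊆ Ω) :
    C ⊆ {x | f x ≤ c} ∨ C ⊆ {x | c ≤ f x} := by
  have h2 : ¬((C ∩ {y | f y < c}).Nonempty ∧ (C ∩ {y | c < f y}).Nonempty) :=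
    fun hB => hnc ⟨hCΩ, hB.1, hB.2⟩
  rcases not_and_or.1 h2 with h3 | h3
  · right
    intro y hy
    by_contra hy'
    exact h3 ⟨y, hy, show f y < c from lt_of_not_ge hy'⟩
  · left
    intro y hy
    by_contra hy'
    exact h3 ⟨y, hy, show c < f y from lt_of_not_ge hy'⟩
end
/-- Lemma (subdivision): subdividing a good cell structure by cutting a top
dimensional cell `Ω` with a hyperplane meeting its relative interior yields a
good cell structure.  A cell `E ⊆ Ω` is cut exactly when both open sides of
the hyperplane meet it; it is replaced by `E ∩ {f = c}`, `E ∩ {f ≤ c}` and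
`E ∩ {f ≥ c}` (the latter two being the closures of the two components of
`E \ W`). -/
theorem subdivision_good {d n : ℕ} (U : Set (Fin d → ℝ)) (hU : IsPolytope U)
    (𝒞 : Set (Set (Fin d → ℝ))) (h𝒞 : IsGoodCellStructure n U 𝒞)
    (Ω : Set (Fin d → ℝ)) (hΩ : Ω ∈ 𝒞) (hΩdim : pdim Ω = n)
    (f : (Fin d → ℝ) →ₗ[ℝ] ℝ) (hf : f ≠ 0) (c : ℝ)
    (hmeets : (intrinsicInterior ℝ Ω ∩ {x | f x = c}).Nonempty) :
    IsGoodCellStructure n U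
      ({E ∈ 𝒞 | ¬ (E ⊆ Ω ∧ (E ∩ {x | f x < c}).Nonempty ∧
          (E ∩ {x | c < f x}).Nonempty)} ∪
        ⋃ E ∈ {E ∈ 𝒞 | E ⊆ Ω ∧ (E ∩ {x | f x < c}).Nonempty ∧
          (E ∩ {x | c < f x}).Nonempty},
          {E ∩ {x | f x = c}, E ∩ {x | f x ≤ c}, E ∩ {x | c ≤ f x}}) := by
  obtain ⟨hCS, hUdim, hgood⟩ := h𝒞
  show IsGoodCellStructure n U (newCells 𝒞 Ω f c)
  have hconv : ∀ E ∈ 𝒞, Convex ℝ E := fun E hE => polytope_convex (hCS.polytope E hE)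
  have hsubU : ∀ C ∈ newCells 𝒞 Ω f c, ∃ E ∈ 𝒞, C ⊆ E := by
    intro C hC
    rw [mem_newCells_iff] at hC
    rcases hC with ⟨hC𝒞, -⟩ | ⟨E, hE, -, hD⟩
    · exact ⟨C, hC𝒞, subset_rfl⟩
    · exact ⟨E, hE, by rcases hD with rfl | rfl | rfl <;> exact inter_subset_left⟩
  have holdU : ∀ E ∈ 𝒞, E ⊆ U := by
    intro E hE
    rw [← hCS.cover]
    exact subset_sUnion_of_mem hE
  have hnewCS : IsCellStructure U (newCells 𝒞 Ω f c) := by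
    constructor
    · -- finite
      refine ((hCS.finite.subset (sep_subset _ _)).union ?_)
      refine Set.Finite.biUnion (hCS.finite.subset (sep_subset _ _)) ?_
      intro E _
      exact (Set.finite_singleton _).insert _ |>.insert _
    · -- polytope
      intro C hC
      rw [mem_newCells_iff] at hC
      rcases hC with ⟨hC𝒞, -⟩ | ⟨E, hE, -, hD⟩
      · exact hCS.polytope C hC𝒞
      · rcases hD with rfl | rfl | rfl
        · exact polytope_inter (hCS.polytope E hE) (polytope_hyperplane f c)
        · exact polytope_inter (hCS.polytope E hE) (polytope_halfspace f c)
        · exact polytope_inter (hCS.polytope E hE) (polytope_halfspace_ge f c)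
    · -- cover
      apply subset_antisymm
      · rintro x ⟨C, hC, hxC⟩
        obtain ⟨E, hE, hCE⟩ := hsubU C hC
        exact holdU E hE (hCE hxC)
      · intro x hx
        obtain ⟨K, hK, hKri, -, -⟩ := covkey (Ω := Ω) (f := f) (c := c) hCS hx
        exact ⟨K, hK, intrinsicInterior_subset hKri⟩
    · -- inter
      intro C hC D hD
      refine ⟨{K ∈ newCells 𝒞 Ω f c | K ⊆ C ∩ D}, sep_subset _ _, ?_⟩
      apply subset_antisymm
      · intro x hx
        obtain ⟨E, hE, hCE⟩ := hsubU C hC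
        have hxU : x ∈ U := holdU E hE (hCE hx.1)
        obtain ⟨K, hK, hKri, hKsub, hKsides⟩ := covkey (Ω := Ω) (f := f) (c := c) hCS hxU
        exact ⟨K, ⟨hK, subset_inter (piece_le hKsub hKsides hC hx.1)
          (piece_le hKsub hKsides hD hx.2)⟩, intrinsicInterior_subset hKri⟩
      · rintro x ⟨K, ⟨-, hKsub⟩, hxK⟩
        exact hKsub hxK
    · -- relint_disjoint
      intro C hC D hD hne
      rw [Set.eq_empty_iff_forall_notMem]
      rintro x ⟨hxC, hxD⟩
      rw [mem_newCells_iff] at hC hD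
      -- reduce each to an owner cell with a side tag
      -- tag : 0 = old, 1 = slice, 2 = le, 3 = ge
      have owner : ∀ {C' : Set (Fin d → ℝ)},
          ((C' ∈ 𝒞 ∧ ¬ Cut Ω f c C') ∨ ∃ E, E ∈ 𝒞 ∧ Cut Ω f c E ∧
            (C' = E ∩ {x | f x = c} ∨ C' = E ∩ {x | f x ≤ c} ∨
              C' = E ∩ {x | c ≤ f x})) →
          x ∈ intrinsicInterior ℝ C' →
          ∃ E, E ∈ 𝒞 ∧ x ∈ intrinsicInterior ℝ E ∧
            ((C' = E ∧ ¬ Cut Ω f c E) ∨ (Cut Ω f c E ∧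
              ((C' = E ∩ {x | f x = c} ∧ f x = c) ∨
               (C' = E ∩ {x | f x ≤ c} ∧ f x < c) ∨
               (C' = E ∩ {x | c ≤ f x} ∧ c < f x)))) := by
        rintro C' (⟨hC𝒞, hnc⟩ | ⟨E, hE, hcut, hD'⟩) hx
        · exact ⟨C', hC𝒞, hx, Or.inl ⟨rfl, hnc⟩⟩
        · obtain ⟨hEΩ, ⟨p, hpE, hpc⟩, ⟨q, hqE, hqc⟩⟩ := hcut
          have hEconv := hconv E hE
          rcases hD' with rfl | rfl | rfl
          · refine ⟨E, hE, relint_eq_subset hEconv hpE hqE hpc hqc hx, Or.inr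
              ⟨⟨hEΩ, ⟨p, hpE, hpc⟩, ⟨q, hqE, hqc⟩⟩, Or.inl ⟨rfl, ?_⟩⟩⟩
            exact (intrinsicInterior_subset hx).2
          · refine ⟨E, hE, relint_le_subset hEconv hpE hqE hpc hqc hx, Or.inr
              ⟨⟨hEΩ, ⟨p, hpE, hpc⟩, ⟨q, hqE, hqc⟩⟩, Or.inr (Or.inl ⟨rfl, ?_⟩)⟩⟩
            exact relint_half_lt hEconv hpE hqE hpc hqc hx
          · refine ⟨E, hE, relint_ge_subset hEconv hpE hqE hpc hqc hx, Or.inr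
              ⟨⟨hEΩ, ⟨p, hpE, hpc⟩, ⟨q, hqE, hqc⟩⟩, Or.inr (Or.inr ⟨rfl, ?_⟩)⟩⟩
            exact relint_ge_lt hEconv hpE hqE hpc hqc hx
      obtain ⟨E₁, hE₁, hxE₁, htag₁⟩ := owner hC hxC
      obtain ⟨E₂, hE₂, hxE₂, htag₂⟩ := owner hD hxD
      have hEeq : E₁ = E₂ := by
        by_contra hEne
        have hdisj := hCS.relint_disjoint E₁ hE₁ E₂ hE₂ hEne
        have : x ∈ intrinsicInterior ℝ E₁ ∩ intrinsicInterior ℝ E₂ := ⟨hxE₁, hxE₂⟩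
        rw [hdisj] at this
        exact this
      subst hEeq
      rcases htag₁ with ⟨rfl, hnc₁⟩ | ⟨hcut₁, htag₁⟩
      · rcases htag₂ with ⟨rfl, -⟩ | ⟨hcut₂, -⟩
        · exact hne rfl
        · exact hnc₁ hcut₂
      · rcases htag₂ with ⟨rfl, hnc₂⟩ | ⟨-, htag₂⟩
        · exact hnc₂ hcut₁
        rcases htag₁ with ⟨rfl, h₁⟩ | ⟨rfl, h₁⟩ | ⟨rfl, h₁⟩ <;>
          rcases htag₂ with ⟨rfl, h₂⟩ | ⟨rfl, h₂⟩ | ⟨rfl, h₂⟩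
        · exact hne rfl
        · exact absurd (h₁ ▸ h₂) (lt_irrefl c)
        · exact absurd (h₁ ▸ h₂) (lt_irrefl c)
        · exact absurd (h₂ ▸ h₁) (lt_irrefl c)
        · exact hne rfl
        · exact absurd (h₂.trans h₁) (lt_irrefl c)
        · exact absurd (h₂ ▸ h₁) (lt_irrefl c)
        · exact absurd (h₁.trans h₂) (lt_irrefl c)
        · exact hne rfl
    · -- faces
      intro C hC F hF
      obtain ⟨g, b, hg0, hsupp, rfl⟩ := hF
      refine ⟨{K ∈ newCells 𝒞 Ω f c | K ⊆ C ∩ {x | g x = b}}, sep_subset _ _, ?_⟩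
      apply subset_antisymm
      · rintro x ⟨hxC, hxb⟩
        obtain ⟨E, hE, hCE⟩ := hsubU C hC
        have hxU : x ∈ U := holdU E hE (hCE hxC)
        obtain ⟨K, hK, hKri, hKsub, hKsides⟩ := covkey (Ω := Ω) (f := f) (c := c) hCS hxU
        have hKC : K ⊆ C := piece_le hKsub hKsides hC hxC
        have hconst := relint_max_principle hKri (fun y hy => hsupp y (hKC hy))
          (show g x = b from hxb)
        exact ⟨K, ⟨hK, subset_inter hKC (fun y hy => hconst y hy)⟩,
          intrinsicInterior_subset hKri⟩
      · rintro x ⟨K, ⟨-, hKsub⟩, hxK⟩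
        exact hKsub hxK
  refine ⟨hnewCS, hUdim, ?_⟩
  intro C hC hdimC
  apply subset_antisymm
  · refine subset_sInter (fun F hF => ?_)
    obtain ⟨E', hE', hlt, hface, hdim, hCF⟩ := hF
    exact hCF
  rw [mem_newCells_iff] at hC
  rcases hC with ⟨hC𝒞, hnc⟩ | ⟨E, hE, hcut, hD⟩
  · -- (7a) C is an old, uncut cell
    intro x hx
    rw [hgood C hC𝒞 hdimC]
    intro F hF
    obtain ⟨E, hE, hltE, hFace, hFdim, hCF⟩ := hF
    by_cases hcutE : Cut Ω f c E
    · obtain ⟨hEΩ, ⟨p, hpE, hpc⟩, ⟨q, hqE, hqc⟩⟩ := hcutE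
      have hcutE' : Cut Ω f c E := ⟨hEΩ, ⟨p, hpE, hpc⟩, ⟨q, hqE, hqc⟩⟩
      obtain ⟨g, b, hg0, hsupp, hFeq⟩ := hFace
      have hFconv : Convex ℝ F := by
        rw [hFeq]
        exact (hconv E hE).inter (convex_hyperplane g.isLinear b)
      have hFE : F ⊆ E := hFeq ▸ inter_subset_left
      have hCΩ : C ⊆ Ω := hCF.trans (hFE.trans hEΩ)
      have hEledim : pdim (E ∩ {y | f y ≤ c}) = pdim E :=
        pdim_le_eq (hconv E hE) hpE hqE hpc hqc
      have hEgedim : pdim (E ∩ {y | c ≤ f y}) = pdim E :=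
        pdim_ge_eq (hconv E hE) hpE hqE hpc hqc
      have hlemem : E ∩ {y | f y ≤ c} ∈ newCells 𝒞 Ω f c :=
        mem_newCells_iff.2 (Or.inr ⟨E, hE, hcutE', Or.inr (Or.inl rfl)⟩)
      have hgemem : E ∩ {y | c ≤ f y} ∈ newCells 𝒞 Ω f c :=
        mem_newCells_iff.2 (Or.inr ⟨E, hE, hcutE', Or.inr (Or.inr rfl)⟩)
      by_cases hF2 : (F ∩ {y | c < f y}).Nonempty
      · by_cases hF1 : (F ∩ {y | f y < c}).Nonempty
        · -- F meets both sides
          obtain ⟨p', hp'F, hp'c⟩ := hF1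
          obtain ⟨q', hq'F, hq'c⟩ := hF2
          rcases not_cut_sides hnc hCΩ with hCside | hCside
          · have hmem : F ∩ {y | f y ≤ c} ∈ {F | ∃ E' ∈ newCells 𝒞 Ω f c,
                pdim C < pdim E' ∧ IsFaceOf F E' ∧ pdim F = pdim C ∧ C ⊆ F} := by
              refine ⟨E ∩ {y | f y ≤ c}, hlemem, by rw [hEledim]; exact hltE,
                isFaceOf_piece_le ⟨g, b, hg0, hsupp, hFeq⟩, ?_,
                subset_inter hCF hCside⟩
              rw [pdim_le_eq hFconv hp'F hq'F hp'c hq'c]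
              exact hFdim
            exact (hx _ hmem).1
          · have hmem : F ∩ {y | c ≤ f y} ∈ {F | ∃ E' ∈ newCells 𝒞 Ω f c,
                pdim C < pdim E' ∧ IsFaceOf F E' ∧ pdim F = pdim C ∧ C ⊆ F} := by
              refine ⟨E ∩ {y | c ≤ f y}, hgemem, by rw [hEgedim]; exact hltE,
                isFaceOf_piece_ge ⟨g, b, hg0, hsupp, hFeq⟩, ?_,
                subset_inter hCF hCside⟩
              rw [pdim_ge_eq hFconv hp'F hq'F hp'c hq'c]
              exact hFdim
            exact (hx _ hmem).1
        · -- F ⊆ {c ≤ f}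
          have hFside : F ⊆ {y | c ≤ f y} := fun y hy =>
            show c ≤ f y from le_of_not_gt (fun h => hF1 ⟨y, hy, h⟩)
          have hmem : F ∈ {F | ∃ E' ∈ newCells 𝒞 Ω f c,
              pdim C < pdim E' ∧ IsFaceOf F E' ∧ pdim F = pdim C ∧ C ⊆ F} :=
            ⟨E ∩ {y | c ≤ f y}, hgemem, by rw [hEgedim]; exact hltE,
              isFaceOf_subset_ge ⟨g, b, hg0, hsupp, hFeq⟩ hFside, hFdim, hCF⟩
          exact hx _ hmem
      · -- F ⊆ {f ≤ c}
        have hFside : F ⊆ {y | f y ≤ c} := fun y hy =>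
          show f y ≤ c from le_of_not_gt (fun h => hF2 ⟨y, hy, h⟩)
        have hmem : F ∈ {F | ∃ E' ∈ newCells 𝒞 Ω f c,
            pdim C < pdim E' ∧ IsFaceOf F E' ∧ pdim F = pdim C ∧ C ⊆ F} :=
          ⟨E ∩ {y | f y ≤ c}, hlemem, by rw [hEledim]; exact hltE,
            isFaceOf_subset_le ⟨g, b, hg0, hsupp, hFeq⟩ hFside, hFdim, hCF⟩
        exact hx _ hmem
    · -- E not cut : keep F
      have hmem : F ∈ {F | ∃ E' ∈ newCells 𝒞 Ω f c,
          pdim C < pdim E' ∧ IsFaceOf F E' ∧ pdim F = pdim C ∧ C ⊆ F} :=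
        ⟨E, mem_newCells_iff.2 (Or.inl ⟨hE, hcutE⟩), hltE, hFace, hFdim, hCF⟩
      exact hx _ hmem
  · -- C is a piece of a cut cell E
    have hcut' := hcut
    obtain ⟨hEΩ, ⟨p, hpE, hpc⟩, ⟨q, hqE, hqc⟩⟩ := hcut
    have hEconv := hconv E hE
    have hEledim : pdim (E ∩ {y | f y ≤ c}) = pdim E := pdim_le_eq hEconv hpE hqE hpc hqc
    have hEgedim : pdim (E ∩ {y | c ≤ f y}) = pdim E := pdim_ge_eq hEconv hpE hqE hpc hqc
    have hlemem : E ∩ {y | f y ≤ c} ∈ newCells 𝒞 Ω f c :=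
      mem_newCells_iff.2 (Or.inr ⟨E, hE, hcut', Or.inr (Or.inl rfl)⟩)
    have hgemem : E ∩ {y | c ≤ f y} ∈ newCells 𝒞 Ω f c :=
      mem_newCells_iff.2 (Or.inr ⟨E, hE, hcut', Or.inr (Or.inr rfl)⟩)
    rcases hD with rfl | rfl | rfl
    · -- (7b) the slice piece
      refine fun x hx => hx _ ⟨E ∩ {y | f y ≤ c}, hlemem, ?_, isFaceOf_slice_le hf,
        rfl, subset_rfl⟩
      rw [hEledim]
      exact pdim_slice_lt hEconv hpE hqE hpc hqc
    · -- (7c) the ≤ piece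
      have hpdimC : pdim (E ∩ {x | f x ≤ c}) = pdim E := hEledim
      have hEdim : pdim E < n := by rw [← hpdimC]; exact hdimC
      obtain ⟨z, hz⟩ := Set.Nonempty.intrinsicInterior hEconv ⟨p, hpE⟩
      have hEΩdim : pdim E < pdim Ω := by rw [hΩdim]; omega
      obtain ⟨D', hD', hD'Ω, hED', hltD', gs, bs, hgs0, hsupps, hEF₁, hF₁dim⟩ :=
        phi_aux hCS (pdim Ω) Ω hΩ le_rfl E hE hEΩ hEΩdim z hz
      have hD'conv := hconv D' hD'
      have hcutD' : Cut Ω f c D' := ⟨hD'Ω, ⟨p, hED' hpE, hpc⟩, ⟨q, hED' hqE, hqc⟩⟩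
      have hD'lemem : D' ∩ {y | f y ≤ c} ∈ newCells 𝒞 Ω f c :=
        mem_newCells_iff.2 (Or.inr ⟨D', hD', hcutD', Or.inr (Or.inl rfl)⟩)
      have hF₁conv : Convex ℝ (D' ∩ {y | gs y = bs}) :=
        hD'conv.inter (convex_hyperplane gs.isLinear bs)
      intro x hx
      have hxle : f x ≤ c := by
        have hmem := hx _ ⟨D' ∩ {y | f y ≤ c}, hD'lemem, ?_,
          isFaceOf_piece_le ⟨gs, bs, hgs0, hsupps, rfl⟩, ?_, ?_⟩
        · exact hmem.2
        · rw [pdim_le_eq hD'conv (hED' hpE) (hED' hqE) hpc hqc, hpdimC]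
          exact hltD'
        · rw [pdim_le_eq hF₁conv (hEF₁ hpE) (hEF₁ hqE) hpc hqc, hF₁dim, hpdimC]
        · exact subset_inter (inter_subset_left.trans hEF₁) inter_subset_right
      have hxE : x ∈ E := by
        rw [hgood E hE hEdim]
        intro F hF
        obtain ⟨E'', hE'', hltE'', hFace, hFdim, hEF⟩ := hF
        by_cases hcutE'' : Cut Ω f c E''
        · have hFconv : Convex ℝ F := by
            obtain ⟨g, b, hg0, hsupp, hFeq⟩ := hFace
            rw [hFeq]
            exact (hconv E'' hE'').inter (convex_hyperplane g.isLinear b)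
          have hE''lemem : E'' ∩ {y | f y ≤ c} ∈ newCells 𝒞 Ω f c :=
            mem_newCells_iff.2 (Or.inr ⟨E'', hE'', hcutE'', Or.inr (Or.inl rfl)⟩)
          obtain ⟨hE''Ω, ⟨p'', hp''E, hp''c⟩, ⟨q'', hq''E, hq''c⟩⟩ := hcutE''
          have hmem := hx _ ⟨E'' ∩ {y | f y ≤ c}, hE''lemem, ?_,
            isFaceOf_piece_le hFace, ?_, ?_⟩
          · exact hmem.1
          · rw [pdim_le_eq (hconv E'' hE'') hp''E hq''E hp''c hq''c, hpdimC]
            exact hltE''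
          · rw [pdim_le_eq hFconv (hEF hpE) (hEF hqE) hpc hqc, hFdim, hpdimC]
          · exact subset_inter (inter_subset_left.trans hEF) inter_subset_right
        · refine hx _ ⟨E'', mem_newCells_iff.2 (Or.inl ⟨hE'', hcutE''⟩), ?_, hFace, ?_, ?_⟩
          · rw [hpdimC]; exact hltE''
          · rw [hpdimC]; exact hFdim
          · exact inter_subset_left.trans hEF
      exact ⟨hxE, hxle⟩
    · -- (7d) the ≥ piece
      have hpdimC : pdim (E ∩ {x | c ≤ f x}) = pdim E := hEgedim
      have hEdim : pdim E < n := by rw [← hpdimC]; exact hdimC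
      obtain ⟨z, hz⟩ := Set.Nonempty.intrinsicInterior hEconv ⟨p, hpE⟩
      have hEΩdim : pdim E < pdim Ω := by rw [hΩdim]; omega
      obtain ⟨D', hD', hD'Ω, hED', hltD', gs, bs, hgs0, hsupps, hEF₁, hF₁dim⟩ :=
        phi_aux hCS (pdim Ω) Ω hΩ le_rfl E hE hEΩ hEΩdim z hz
      have hD'conv := hconv D' hD'
      have hcutD' : Cut Ω f c D' := ⟨hD'Ω, ⟨p, hED' hpE, hpc⟩, ⟨q, hED' hqE, hqc⟩⟩
      have hD'gemem : D' ∩ {y | c ≤ f y} ∈ newCells 𝒞 Ω f c :=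
        mem_newCells_iff.2 (Or.inr ⟨D', hD', hcutD', Or.inr (Or.inr rfl)⟩)
      have hF₁conv : Convex ℝ (D' ∩ {y | gs y = bs}) :=
        hD'conv.inter (convex_hyperplane gs.isLinear bs)
      intro x hx
      have hxge : c ≤ f x := by
        have hmem := hx _ ⟨D' ∩ {y | c ≤ f y}, hD'gemem, ?_,
          isFaceOf_piece_ge ⟨gs, bs, hgs0, hsupps, rfl⟩, ?_, ?_⟩
        · exact hmem.2
        · rw [pdim_ge_eq hD'conv (hED' hpE) (hED' hqE) hpc hqc, hpdimC]
          exact hltD'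
        · rw [pdim_ge_eq hF₁conv (hEF₁ hpE) (hEF₁ hqE) hpc hqc, hF₁dim, hpdimC]
        · exact subset_inter (inter_subset_left.trans hEF₁) inter_subset_right
      have hxE : x ∈ E := by
        rw [hgood E hE hEdim]
        intro F hF
        obtain ⟨E'', hE'', hltE'', hFace, hFdim, hEF⟩ := hF
        by_cases hcutE'' : Cut Ω f c E''
        · have hFconv : Convex ℝ F := by
            obtain ⟨g, b, hg0, hsupp, hFeq⟩ := hFace
            rw [hFeq]
            exact (hconv E'' hE'').inter (convex_hyperplane g.isLinear b)
          have hE''gemem : E'' ∩ {y | c ≤ f y} ∈ newCells 𝒞 Ω f c :=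
            mem_newCells_iff.2 (Or.inr ⟨E'', hE'', hcutE'', Or.inr (Or.inr rfl)⟩)
          obtain ⟨hE''Ω, ⟨p'', hp''E, hp''c⟩, ⟨q'', hq''E, hq''c⟩⟩ := hcutE''
          have hmem := hx _ ⟨E'' ∩ {y | c ≤ f y}, hE''gemem, ?_,
            isFaceOf_piece_ge hFace, ?_, ?_⟩
          · exact hmem.1
          · rw [pdim_ge_eq (hconv E'' hE'') hp''E hq''E hp''c hq''c, hpdimC]
            exact hltE''
          · rw [pdim_ge_eq hFconv (hEF hpE) (hEF hqE) hpc hqc, hFdim, hpdimC]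
          · exact subset_inter (inter_subset_left.trans hEF) inter_subset_right
        · refine hx _ ⟨E'', mem_newCells_iff.2 (Or.inl ⟨hE'', hcutE''⟩), ?_, hFace, ?_, ?_⟩
          · rw [hpdimC]; exact hltE''
          · rw [hpdimC]; exact hFdim
          · exact inter_subset_left.trans hEF
      exact ⟨hxE, hxge⟩
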